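/- Let f : ℝⁿ → ℝᵐ and φ : ℝᵐ → ℝⁿ be continuously differentiable maps, and let p ∈ ℝⁿ satisfy φ(f(p)) = 0 and D(φ∘f)(p) : ℝⁿ → ℝⁿ is a linear isomorphism. Then there exist ε > 0 and a bounded open neighborhood U of p such that for every continuously differentiable map g : ℝⁿ → ℝᵐ with sup_{x ∈ closure(U)} (‖g(x) − f(x)‖ + ‖Dg(x) − Df(x)‖_op) ≤ ε, there exists exactly one point q ∈ U with φ(g(q)) = 0, and moreover D(φ∘g)(q) is a linear isomorphism. -/

import Mathlib

open Metric Set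

/-- A unit in the ring of continuous endomorphisms is bijective. -/
lemma aux_unit_bijective {E : Type*} [NormedAddCommGroup E] [NormedSpace ℝ E]
    (u : (E →L[ℝ] E)ˣ) : Function.Bijective u.val := by
  apply Function.bijective_iff_has_inverse.mpr
  refine ⟨(u⁻¹ : _ˣ).val, fun x => ?_, fun x => ?_⟩
  · rw [show (u⁻¹:_ˣ).val (u.val x) = ((u⁻¹:_ˣ).val * u.val) x from rfl, u.inv_mul]; rfl
  · rw [show u.val ((u⁻¹:_ˣ).val x) = (u.val * (u⁻¹:_ˣ).val) x from rfl, u.mul_inv]; rfl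

/-- A continuous linear map close enough to an invertible one is bijective. -/
lemma aux_bijective_of_close {E : Type*} [NormedAddCommGroup E] [NormedSpace ℝ E]
    [CompleteSpace E] (A : E ≃L[ℝ] E) (B : E →L[ℝ] E)
    (h : ‖(A : E →L[ℝ] E) - B‖ * ‖(A.symm : E →L[ℝ] E)‖ < 1) :
    Function.Bijective B := by
  set t : E →L[ℝ] E := (A.symm : E →L[ℝ] E).comp ((A : E →L[ℝ] E) - B) with ht_def
  have ht : ‖t‖ < 1 := by
    calc ‖t‖ ≤ ‖(A.symm : E →L[ℝ] E)‖ * ‖(A : E →L[ℝ] E) - B‖ :=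
          ContinuousLinearMap.opNorm_comp_le _ _
      _ < 1 := by rw [mul_comm]; exact h
  set u : (E →L[ℝ] E)ˣ := Units.oneSub t ht with hu_def
  have hB : ⇑B = ⇑(A : E →L[ℝ] E) ∘ ⇑u.val := by
    funext v
    have huv : u.val v = v - (A.symm : E →L[ℝ] E) (((A : E →L[ℝ] E) - B) v) := by
      simp [hu_def, Units.oneSub, ht_def, ContinuousLinearMap.sub_apply,
        ContinuousLinearMap.one_apply, ContinuousLinearMap.comp_apply]
    simp only [Function.comp_apply, huv, map_sub]
    have : (A : E →L[ℝ] E) ((A.symm : E →L[ℝ] E) (((A : E →L[ℝ] E) - B) v))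
        = ((A : E →L[ℝ] E) - B) v := by
      simp
    rw [this]
    simp [ContinuousLinearMap.sub_apply]
  rw [hB]
  exact Function.Bijective.comp (by simpa using A.bijective) (aux_unit_bijective u)


/-- Mean-value bound on a convex set. -/
lemma aux_lipschitz_bound {E F' : Type*} [NormedAddCommGroup E] [NormedSpace ℝ E]
    [NormedAddCommGroup F'] [NormedSpace ℝ F'] {h : E → F'} (hdiff : Differentiable ℝ h)
    {s : Set E} (hs : Convex ℝ s) {C : ℝ} (hb : ∀ x ∈ s, ‖fderiv ℝ h x‖ ≤ C)
    {x y : E} (hx : x ∈ s) (hy : y ∈ s) : ‖h y - h x‖ ≤ C * ‖y - x‖ :=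
  Convex.norm_image_sub_le_of_norm_hasFDerivWithin_le
    (fun z _ => (hdiff z).hasFDerivAt.hasFDerivWithinAt) hb hs hx hy

/-- A differentiable map whose derivative stays `c`-close to `A` on a convex set
linearly approximates `A` there. -/
lemma aux_approx {E F' : Type*} [NormedAddCommGroup E] [NormedSpace ℝ E]
    [NormedAddCommGroup F'] [NormedSpace ℝ F'] {h : E → F'} (hdiff : Differentiable ℝ h)
    (A : E →L[ℝ] F') {s : Set E} (hs : Convex ℝ s) {c : NNReal}
    (hb : ∀ x ∈ s, ‖fderiv ℝ h x - A‖ ≤ (c : ℝ)) :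
    ApproximatesLinearOn h A s c := by
  intro x hx y hy
  have hdiff2 : Differentiable ℝ (fun z => h z - A z) := fun z =>
    (hdiff z).sub (A.differentiable z)
  have hfd : ∀ z, fderiv ℝ (fun w => h w - A w) z = fderiv ℝ h z - A := by
    intro z
    have := ((hdiff z).hasFDerivAt.sub A.hasFDerivAt).fderiv
    exact this
  have hmv := aux_lipschitz_bound hdiff2 hs
    (C := (c : ℝ)) (fun z hz => by rw [hfd z]; exact hb z hz) hy hx
  have e : h x - A x - (h y - A y) = h x - h y - A (x - y) := by
    rw [map_sub]; abel
  rw [← e]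
  exact hmv

set_option maxHeartbeats 1000000 in
/-- If `φ ∘ f` has invertible derivative at a zero `p` of `φ ∘ f`, then every
`g` that is `C¹`-close enough to `f` on a compact neighbourhood has exactly one point `q`
near `p` with `φ (g q) = 0`, and there `D(φ ∘ g)(q)` is again invertible. -/
theorem stmt1 (n m : ℕ)
    (f : EuclideanSpace ℝ (Fin n) → EuclideanSpace ℝ (Fin m))
    (φ : EuclideanSpace ℝ (Fin m) → EuclideanSpace ℝ (Fin n))
    (hf : ContDiff ℝ 1 f) (hφ : ContDiff ℝ 1 φ)
    (p : EuclideanSpace ℝ (Fin n))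
    (hp : φ (f p) = 0)
    (hiso : Function.Bijective (fderiv ℝ (φ ∘ f) p)) :
    ∃ ε > (0 : ℝ), ∃ U : Set (EuclideanSpace ℝ (Fin n)),
      IsOpen U ∧ Bornology.IsBounded U ∧ p ∈ U ∧
      ∀ g : EuclideanSpace ℝ (Fin n) → EuclideanSpace ℝ (Fin m), ContDiff ℝ 1 g →
        (∀ x ∈ closure U, ‖g x - f x‖ + ‖fderiv ℝ g x - fderiv ℝ f x‖ ≤ ε) →
        (∃! q, q ∈ U ∧ φ (g q) = 0) ∧
        (∀ q ∈ U, φ (g q) = 0 → Function.Bijective (fderiv ℝ (φ ∘ g) q)) := by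
  rcases subsingleton_or_nontrivial (EuclideanSpace ℝ (Fin n)) with hsub | hnt
  · -- degenerate case `n = 0`
    refine ⟨1, one_pos, ball p 1, isOpen_ball, isBounded_ball, mem_ball_self one_pos, ?_⟩
    intro g _ _
    refine ⟨⟨p, ⟨mem_ball_self one_pos, Subsingleton.elim _ _⟩,
      fun y _ => Subsingleton.elim y p⟩, ?_⟩
    intro q _ _
    exact ⟨fun a b _ => Subsingleton.elim a b, fun y => ⟨y, Subsingleton.elim _ _⟩⟩
  -- main case
  have hF : ContDiff ℝ 1 (φ ∘ f) := hφ.comp hf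
  obtain ⟨A, hA⟩ : ∃ A : EuclideanSpace ℝ (Fin n) ≃L[ℝ] EuclideanSpace ℝ (Fin n),
      (A : EuclideanSpace ℝ (Fin n) →L[ℝ] EuclideanSpace ℝ (Fin n)) = fderiv ℝ (φ ∘ f) p :=
    ⟨(LinearEquiv.ofBijective (↑(fderiv ℝ (φ ∘ f) p)) hiso).toContinuousLinearEquiv,
      by ext v; rfl⟩
  set Na : ℝ := ‖(A.symm : EuclideanSpace ℝ (Fin n) →L[ℝ] EuclideanSpace ℝ (Fin n))‖ with hNa_def
  have hNa0 : 0 < Na := by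
    rw [hNa_def, norm_pos_iff]
    intro h0
    obtain ⟨v, hv⟩ := exists_ne (0 : EuclideanSpace ℝ (Fin n))
    apply hv
    have : A.symm (A v) = 0 := by
      rw [show A.symm (A v) = (A.symm : EuclideanSpace ℝ (Fin n) →L[ℝ] _) (A v) from rfl, h0]
      rfl
    rwa [A.symm_apply_apply] at this
  set κ : ℝ := (4 * Na)⁻¹ with hκ_def
  have hκ0 : 0 < κ := by positivity
  -- choice of the radius r
  have hcont : Continuous (fderiv ℝ (φ ∘ f)) := hF.continuous_fderiv one_ne_zero
  obtain ⟨δ, hδ0, hδ⟩ := Metric.continuousAt_iff.1 hcont.continuousAt κ hκ0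
  set r : ℝ := δ / 2 with hr_def
  have hr0 : 0 < r := by positivity
  have hball : ∀ x ∈ closedBall p r, ‖fderiv ℝ (φ ∘ f) x - fderiv ℝ (φ ∘ f) p‖ ≤ κ := by
    intro x hx
    have : dist x p < δ := lt_of_le_of_lt (mem_closedBall.1 hx) (by rw [hr_def]; linarith)
    have := hδ this
    rw [dist_eq_norm] at this
    exact this.le
  have hKcpt : IsCompact (closedBall p r) := isCompact_closedBall p r
  -- bound on f over closedBall p r
  obtain ⟨R, hR⟩ := hKcpt.exists_bound_of_continuousOn hf.continuous.continuousOn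
  have hR0 : 0 ≤ R := le_trans (norm_nonneg _) (hR p (mem_closedBall_self hr0.le))
  -- bound on derivative of φ on big ball
  have hK'cpt : IsCompact (closedBall (0 : EuclideanSpace ℝ (Fin m)) (R + 1)) :=
    isCompact_closedBall _ _
  obtain ⟨C₂, hC₂⟩ :=
    hK'cpt.exists_bound_of_continuousOn (hφ.continuous_fderiv one_ne_zero).continuousOn
  set M₂ : ℝ := max C₂ 1 with hM₂_def
  have hM₂1 : (1:ℝ) ≤ M₂ := le_max_right _ _
  have hM₂0 : 0 < M₂ := lt_of_lt_of_le one_pos hM₂1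
  have hM₂ : ∀ y ∈ closedBall (0 : EuclideanSpace ℝ (Fin m)) (R + 1), ‖fderiv ℝ φ y‖ ≤ M₂ :=
    fun y hy => le_trans (hC₂ y hy) (le_max_left _ _)
  -- bound on derivative of f
  obtain ⟨C₁, hC₁⟩ :=
    hKcpt.exists_bound_of_continuousOn (hf.continuous_fderiv one_ne_zero).continuousOn
  set M₁ : ℝ := max C₁ 1 with hM₁_def
  have hM₁1 : (1:ℝ) ≤ M₁ := le_max_right _ _
  have hM₁0 : 0 < M₁ := lt_of_lt_of_le one_pos hM₁1
  have hM₁ : ∀ x ∈ closedBall p r, ‖fderiv ℝ f x‖ ≤ M₁ :=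
    fun x hx => le_trans (hC₁ x hx) (le_max_left _ _)
  -- uniform continuity of fderiv φ on the big ball
  have hUC := hK'cpt.uniformContinuousOn_of_continuous (hφ.continuous_fderiv one_ne_zero).continuousOn
  obtain ⟨δ₂, hδ₂0, hδ₂⟩ :=
    Metric.uniformContinuousOn_iff_le.1 hUC (κ / (2 * M₁)) (by positivity)
  -- choice of ε
  set ε : ℝ := min 1 (min δ₂ (min (κ / (2 * M₂)) (κ * r / (2 * M₂)))) with hε_def
  have hε0 : 0 < ε := by
    apply lt_min one_pos
    apply lt_min hδ₂0
    apply lt_min <;> positivity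
  have hε1 : ε ≤ 1 := min_le_left _ _
  have hεδ₂ : ε ≤ δ₂ := le_trans (min_le_right _ _) (min_le_left _ _)
  have hεM₂ : ε ≤ κ / (2 * M₂) :=
    le_trans (min_le_right _ _) (le_trans (min_le_right _ _) (min_le_left _ _))
  have hεκr : ε ≤ κ * r / (2 * M₂) :=
    le_trans (min_le_right _ _) (le_trans (min_le_right _ _) (min_le_right _ _))
  refine ⟨ε, hε0, ball p r, isOpen_ball, isBounded_ball, mem_ball_self hr0, ?_⟩
  intro g hg hclose
  rw [closure_ball p hr0.ne'] at hclose
  have hval : ∀ x ∈ closedBall p r, ‖g x - f x‖ ≤ ε := fun x hx =>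
    le_trans (le_add_of_nonneg_right (norm_nonneg _)) (hclose x hx)
  have hder : ∀ x ∈ closedBall p r, ‖fderiv ℝ g x - fderiv ℝ f x‖ ≤ ε := fun x hx =>
    le_trans (le_add_of_nonneg_left (norm_nonneg _)) (hclose x hx)
  have hfK' : ∀ x ∈ closedBall p r, f x ∈ closedBall (0 : EuclideanSpace ℝ (Fin m)) (R + 1) := by
    intro x hx
    rw [mem_closedBall, dist_zero_right]
    linarith [hR x hx]
  have hgK' : ∀ x ∈ closedBall p r, g x ∈ closedBall (0 : EuclideanSpace ℝ (Fin m)) (R + 1) := by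
    intro x hx
    rw [mem_closedBall, dist_zero_right]
    have : ‖g x‖ ≤ ‖g x - f x‖ + ‖f x‖ := by
      calc ‖g x‖ = ‖(g x - f x) + f x‖ := by rw [sub_add_cancel]
        _ ≤ ‖g x - f x‖ + ‖f x‖ := norm_add_le _ _
    linarith [hval x hx, hR x hx]
  -- chain rule
  have hGd : ∀ x, fderiv ℝ (φ ∘ g) x = (fderiv ℝ φ (g x)).comp (fderiv ℝ g x) := fun x =>
    fderiv_comp x ((hφ.differentiable one_ne_zero) _) ((hg.differentiable one_ne_zero) _)
  have hFd : ∀ x, fderiv ℝ (φ ∘ f) x = (fderiv ℝ φ (f x)).comp (fderiv ℝ f x) := fun x =>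
    fderiv_comp x ((hφ.differentiable one_ne_zero) _) ((hf.differentiable one_ne_zero) _)
  -- key derivative bound
  have key : ∀ x ∈ closedBall p r,
      ‖fderiv ℝ (φ ∘ g) x -
        (A : EuclideanSpace ℝ (Fin n) →L[ℝ] EuclideanSpace ℝ (Fin n))‖ ≤ (2 * Na)⁻¹ := by
    intro x hx
    have e1 : fderiv ℝ (φ ∘ g) x - fderiv ℝ (φ ∘ f) x
        = (fderiv ℝ φ (g x)).comp (fderiv ℝ g x - fderiv ℝ f x)
          + ((fderiv ℝ φ (g x)) - (fderiv ℝ φ (f x))).comp (fderiv ℝ f x) := by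
      rw [hGd x, hFd x]
      refine ContinuousLinearMap.ext fun v => ?_
      simp only [ContinuousLinearMap.comp_apply, ContinuousLinearMap.sub_apply,
        ContinuousLinearMap.add_apply, map_sub]
      abel
    have b1 : ‖(fderiv ℝ φ (g x)).comp (fderiv ℝ g x - fderiv ℝ f x)‖ ≤ M₂ * ε :=
      le_trans (ContinuousLinearMap.opNorm_comp_le _ _)
        (mul_le_mul (hM₂ _ (hgK' x hx)) (hder x hx) (norm_nonneg _) hM₂0.le)
    have b2 : ‖((fderiv ℝ φ (g x)) - (fderiv ℝ φ (f x))).comp (fderiv ℝ f x)‖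
        ≤ (κ / (2 * M₁)) * M₁ := by
      apply le_trans (ContinuousLinearMap.opNorm_comp_le _ _)
      apply mul_le_mul _ (hM₁ x hx) (norm_nonneg _) (by positivity)
      have hdist : dist (g x) (f x) ≤ δ₂ := by
        rw [dist_eq_norm]; exact le_trans (hval x hx) hεδ₂
      have := hδ₂ (g x) (hgK' x hx) (f x) (hfK' x hx) hdist
      rwa [dist_eq_norm] at this
    have hMε : M₂ * ε ≤ κ / 2 := by
      have := mul_le_mul_of_nonneg_left hεM₂ hM₂0.le
      calc M₂ * ε ≤ M₂ * (κ / (2 * M₂)) := this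
        _ = κ / 2 := by field_simp
    have hM1κ : (κ / (2 * M₁)) * M₁ = κ / 2 := by field_simp
    have h1 : ‖fderiv ℝ (φ ∘ g) x - fderiv ℝ (φ ∘ f) x‖ ≤ κ := by
      rw [e1]
      calc ‖_ + _‖ ≤ _ + _ := norm_add_le _ _
        _ ≤ M₂ * ε + (κ / (2 * M₁)) * M₁ := add_le_add b1 b2
        _ ≤ κ / 2 + κ / 2 := by rw [hM1κ]; linarith
        _ = κ := by ring
    have h2 : ‖fderiv ℝ (φ ∘ f) x -
        (A : EuclideanSpace ℝ (Fin n) →L[ℝ] EuclideanSpace ℝ (Fin n))‖ ≤ κ := by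
      rw [hA]; exact hball x hx
    calc ‖fderiv ℝ (φ ∘ g) x - (A : EuclideanSpace ℝ (Fin n) →L[ℝ] EuclideanSpace ℝ (Fin n))‖
        = ‖(fderiv ℝ (φ ∘ g) x - fderiv ℝ (φ ∘ f) x) + (fderiv ℝ (φ ∘ f) x -
            (A : EuclideanSpace ℝ (Fin n) →L[ℝ] EuclideanSpace ℝ (Fin n)))‖ := by abel_nf
      _ ≤ _ + _ := norm_add_le _ _
      _ ≤ κ + κ := add_le_add h1 h2
      _ = (2 * Na)⁻¹ := by rw [hκ_def]; field_simp; ring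
  -- the NNReal constant
  set c : NNReal := Real.toNNReal ((2 * Na)⁻¹) with hc_def
  have hcR : (c : ℝ) = (2 * Na)⁻¹ := Real.coe_toNNReal _ (by positivity)
  have hcN : c < (‖(A.symm : EuclideanSpace ℝ (Fin n) →L[ℝ] EuclideanSpace ℝ (Fin n))‖₊)⁻¹ := by
    rw [← NNReal.coe_lt_coe, NNReal.coe_inv, hcR]
    have : ((‖(A.symm : EuclideanSpace ℝ (Fin n) →L[ℝ] EuclideanSpace ℝ (Fin n))‖₊ : ℝ)) = Na :=
      rfl
    rw [this]
    rw [inv_lt_inv₀ (by positivity) hNa0]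
    linarith
  -- the approximation property
  have happrox : ApproximatesLinearOn (φ ∘ g)
      (A : EuclideanSpace ℝ (Fin n) →L[ℝ] EuclideanSpace ℝ (Fin n)) (closedBall p r) c :=
    aux_approx ((hφ.comp hg).differentiable one_ne_zero) _ (convex_closedBall p r)
      (fun z hz => by rw [hcR]; exact key z hz)
  -- bound on φ (g p)
  have hpK : p ∈ closedBall p r := mem_closedBall_self hr0.le
  have hGp : ‖φ (g p) - φ (f p)‖ ≤ M₂ * ε := by
    have hmv := aux_lipschitz_bound (hφ.differentiable one_ne_zero) (convex_closedBall _ _)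
      hM₂ (hfK' p hpK) (hgK' p hpK)
    exact le_trans hmv (mul_le_mul_of_nonneg_left (hval p hpK) hM₂0.le)
  have hGp0 : ‖φ (g p)‖ ≤ κ * r / 2 := by
    have : ‖φ (g p)‖ = ‖φ (g p) - φ (f p)‖ := by rw [hp, sub_zero]
    rw [this]
    have h2 : M₂ * ε ≤ M₂ * (κ * r / (2 * M₂)) := mul_le_mul_of_nonneg_left hεκr hM₂0.le
    have h3 : M₂ * (κ * r / (2 * M₂)) = κ * r / 2 := by field_simp
    linarith
  -- existence of a zero via surjectivity
  have hsub2 : closedBall p (r / 2) ⊆ closedBall p r :=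
    closedBall_subset_closedBall (by linarith)
  have hsurj := happrox.surjOn_closedBall_of_nonlinearRightInverse
    A.toNonlinearRightInverse (by positivity : (0:ℝ) ≤ r / 2) hsub2
  have hnn : ((A.toNonlinearRightInverse.nnnorm : ℝ)) = Na := rfl
  have h0mem : (0 : EuclideanSpace ℝ (Fin n)) ∈
      closedBall ((φ ∘ g) p) (((A.toNonlinearRightInverse.nnnorm : ℝ)⁻¹ - c) * (r / 2)) := by
    rw [mem_closedBall, dist_comm, dist_eq_norm, sub_zero, hnn, hcR]
    have heq : (Na⁻¹ - (2 * Na)⁻¹) * (r / 2) = κ * r := by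
      rw [hκ_def]; field_simp; ring
    rw [heq]
    have : κ * r / 2 ≤ κ * r := by nlinarith
    exact le_trans hGp0 this
  obtain ⟨q, hqmem, hq0⟩ := hsurj h0mem
  have hqU : q ∈ ball p r := by
    rw [mem_ball]
    exact lt_of_le_of_lt (mem_closedBall.1 hqmem) (by linarith)
  have hinj := happrox.injOn (Or.inr hcN)
  constructor
  · refine ⟨q, ⟨hqU, hq0⟩, ?_⟩
    rintro y ⟨hyU, hy0⟩
    exact hinj (ball_subset_closedBall hyU) (hsub2 hqmem)
      (by rw [show (φ ∘ g) y = φ (g y) from rfl, hy0, hq0])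
  · intro q' hq' _
    apply aux_bijective_of_close A (fderiv ℝ (φ ∘ g) q')
    have hk := key q' (ball_subset_closedBall hq')
    rw [norm_sub_rev] at hk
    calc ‖(A : EuclideanSpace ℝ (Fin n) →L[ℝ] EuclideanSpace ℝ (Fin n))
          - fderiv ℝ (φ ∘ g) q'‖ * Na ≤ (2 * Na)⁻¹ * Na :=
        mul_le_mul_of_nonneg_right hk hNa0.le
      _ = 1 / 2 := by field_simp
      _ < 1 := by norm_num
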